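/- Let g(E) = E − 3E² + (3/4)E³, let E_c = (4 − 2√3)/3 and I₀ = g(E_c). Then 0 < E_c < 1, g'(E_c) = 0, and g attains its maximum on [0,1] exactly at E_c. Consequently: for 0 < I < I₀ the equation g(E) = I has exactly two solutions in (0,1); for I = I₀ it has exactly one solution in (0,1], namely the double root E_c; and for I > I₀ it has no solution in [0,1]. (Since the Karma equilibria on the segment {n = 0, 0 ≤ E ≤ 1} are exactly the solutions of g(E) = I, the two E-axis equilibria collide in a saddle-node at I = I₀ ≈ 0.08718 and disappear for I > I₀.) -/

import Mathlib

open Real Set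

/-- Saddle-node of the Karma `E`-axis equilibria: with
`g(E) = E - 3E² + (3/4)E³`, `E_c = (4 - 2√3)/3` and `I₀ = g(E_c)`, one has
`0 < E_c < 1`, `g'(E_c) = 0`, `g` attains its maximum on `[0,1]` exactly at
`E_c`; for `0 < I < I₀` the equation `g(E) = I` has exactly two solutions in
`(0,1)`, for `I = I₀` exactly one solution in `(0,1]` (namely `E_c`), and for
`I > I₀` no solution in `[0,1]`. -/
theorem karma_saddle_node (g : ℝ → ℝ)
    (hg : ∀ E, g E = E - 3 * E ^ 2 + (3 / 4) * E ^ 3)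
    (Ec I₀ : ℝ) (hEc : Ec = (4 - 2 * Real.sqrt 3) / 3) (hI₀ : I₀ = g Ec) :
    (0 < Ec ∧ Ec < 1) ∧
    HasDerivAt g 0 Ec ∧
    (∀ E ∈ Icc (0:ℝ) 1, g E ≤ g Ec) ∧
    (∀ E ∈ Icc (0:ℝ) 1, E ≠ Ec → g E < g Ec) ∧
    (∀ I : ℝ, 0 < I → I < I₀ →
      ∃ E₁ E₂ : ℝ, E₁ ≠ E₂ ∧ {E : ℝ | E ∈ Ioo (0:ℝ) 1 ∧ g E = I} = {E₁, E₂}) ∧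
    ({E : ℝ | E ∈ Ioc (0:ℝ) 1 ∧ g E = I₀} = {Ec}) ∧
    (∀ I : ℝ, I₀ < I → ∀ E ∈ Icc (0:ℝ) 1, g E ≠ I) := by
  have hgf : g = fun E => E - 3 * E ^ 2 + (3 / 4) * E ^ 3 := funext hg
  set s := Real.sqrt 3 with hs_def
  have hs : s ^ 2 = 3 := Real.sq_sqrt (by norm_num)
  have hs_lb : (1.7 : ℝ) < s := by nlinarith [Real.sqrt_nonneg 3]
  have hs_ub : s < 1.8 := by nlinarith [Real.sqrt_nonneg 3]
  have hEc0 : 0 < Ec := by rw [hEc]; nlinarith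
  have hEc1 : Ec < 1 := by rw [hEc]; nlinarith
  -- key identity
  have hkey : ∀ E : ℝ, g E - g Ec = 3/4 * (E - Ec)^2 * (E - (4 + 4*s)/3) := by
    intro E
    rw [hg, hg, hEc]
    linear_combination (2/3*s + E - 4/3) * hs
  have hb1 : (1:ℝ) < (4 + 4*s)/3 := by nlinarith
  -- derivative
  have hderivAt : ∀ x : ℝ, HasDerivAt g (1 - 6*x + 9/4*x^2) x := by
    intro x
    rw [hgf]
    have h := ((hasDerivAt_id x).sub (((hasDerivAt_pow 2 x)).const_mul 3)).add
      (((hasDerivAt_pow 3 x)).const_mul (3/4))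
    refine h.congr_deriv ?_
    simp
    ring
  have hderiv : ∀ x : ℝ, deriv g x = 1 - 6*x + 9/4*x^2 := fun x => (hderivAt x).deriv
  have hdfact : ∀ x : ℝ, 1 - 6*x + 9/4*x^2 = 9/4 * (x - Ec) * (x - (4 + 2*s)/3) := by
    intro x
    rw [hEc]
    linear_combination hs
  have hEc2 : (1:ℝ) < (4 + 2*s)/3 := by nlinarith
  have hcont : Continuous g := by
    rw [hgf]
    exact (continuous_id.sub ((continuous_const.mul (continuous_pow 2)))).add
      ((continuous_const.mul (continuous_pow 3)))
  -- strict mono on [0, Ec]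
  have hmono : StrictMonoOn g (Icc 0 Ec) := by
    apply strictMonoOn_of_deriv_pos (convex_Icc 0 Ec) hcont.continuousOn
    intro x hx
    rw [interior_Icc] at hx
    rw [hderiv, hdfact]
    nlinarith [hx.1, hx.2]
  have hanti : StrictAntiOn g (Icc Ec 1) := by
    apply strictAntiOn_of_deriv_neg (convex_Icc Ec 1) hcont.continuousOn
    intro x hx
    rw [interior_Icc] at hx
    rw [hderiv, hdfact]
    nlinarith [hx.1, hx.2]
  have hmax : ∀ E ∈ Icc (0:ℝ) 1, E ≠ Ec → g E < g Ec := by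
    intro E hE hne
    have h := hkey E
    have h1 : (E - Ec)^2 > 0 := by
      have : E - Ec ≠ 0 := sub_ne_zero.mpr hne
      positivity
    have h2 : E - (4 + 4*s)/3 < 0 := by nlinarith [hE.2]
    nlinarith
  have hmax' : ∀ E ∈ Icc (0:ℝ) 1, g E ≤ g Ec := by
    intro E hE
    rcases eq_or_ne E Ec with h | h
    · rw [h]
    · exact (hmax E hE h).le
  have hg0 : g 0 = 0 := by rw [hg]; ring
  have hg1 : g 1 = -5/4 := by rw [hg]; norm_num
  have hder0 : HasDerivAt g 0 Ec := by
    have h0 := hderivAt Ec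
    rw [show (1 - 6*Ec + 9/4*Ec^2 : ℝ) = 0 from by rw [hdfact]; ring] at h0
    exact h0
  refine ⟨⟨hEc0, hEc1⟩, hder0, hmax', hmax, ?_, ?_, ?_⟩
  · -- two solutions
    intro I hI0 hII₀
    have hIEc : I < g Ec := hI₀ ▸ hII₀
    have h1 : ∃ E₁ ∈ Ioo (0:ℝ) Ec, g E₁ = I := by
      have := intermediate_value_Ioo hEc0.le hcont.continuousOn (a := 0) (b := Ec)
      have hmem : I ∈ Ioo (g 0) (g Ec) := ⟨by rw [hg0]; exact hI0, hIEc⟩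
      obtain ⟨E₁, hE₁, hgE₁⟩ := this hmem
      exact ⟨E₁, hE₁, hgE₁⟩
    have h2 : ∃ E₂ ∈ Ioo Ec (1:ℝ), g E₂ = I := by
      have := intermediate_value_Ioo' hEc1.le hcont.continuousOn (a := Ec) (b := 1)
      have hmem : I ∈ Ioo (g 1) (g Ec) := ⟨by rw [hg1]; linarith, hIEc⟩
      obtain ⟨E₂, hE₂, hgE₂⟩ := this hmem
      exact ⟨E₂, hE₂, hgE₂⟩
    obtain ⟨E₁, hE₁, hgE₁⟩ := h1
    obtain ⟨E₂, hE₂, hgE₂⟩ := h2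
    refine ⟨E₁, E₂, by linarith [hE₁.2, hE₂.1], ?_⟩
    ext E
    simp only [mem_setOf_eq, mem_insert_iff, mem_singleton_iff]
    constructor
    · rintro ⟨⟨hE0, hE1'⟩, hgE⟩
      have hne : E ≠ Ec := by
        rintro rfl
        exact absurd hgE (by linarith)
      rcases lt_or_gt_of_ne hne with h | h
      · left
        exact hmono.injOn ⟨hE0.le, h.le⟩ ⟨hE₁.1.le, hE₁.2.le⟩ (by rw [hgE, hgE₁])
      · right
        exact hanti.injOn ⟨h.le, hE1'.le⟩ ⟨hE₂.1.le, hE₂.2.le⟩ (by rw [hgE, hgE₂])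
    · rintro (rfl | rfl)
      · exact ⟨⟨hE₁.1, lt_trans hE₁.2 hEc1⟩, hgE₁⟩
      · exact ⟨⟨lt_trans hEc0 hE₂.1, hE₂.2⟩, hgE₂⟩
  · -- I = I₀ case
    ext E
    simp only [mem_setOf_eq, mem_singleton_iff]
    constructor
    · rintro ⟨⟨hE0, hE1'⟩, hgE⟩
      by_contra hne
      have := hmax E ⟨hE0.le, hE1'⟩ hne
      rw [hgE, hI₀] at this
      exact lt_irrefl _ this
    · rintro rfl
      exact ⟨⟨hEc0, hEc1.le⟩, hI₀.symm⟩
  · -- I > I₀ case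
    intro I hI E hE hgE
    have := hmax' E hE
    rw [hgE, ← hI₀] at this
    linarith
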